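/- For k with 2 ≤ k ≤ n - 1, the permutation w with one-line notation (k+1)(k+2)⋯n k 1 2 ⋯ (k-1) contains exactly (n-k)(k-1) occurrences of the pattern 321 (triples i < j < l with w(i) > w(j) > w(l)). -/

import Mathlib

/-- The permutation with one-line notation (k+1)(k+2)⋯n k 1 2 ⋯ (k-1)
(0-indexed: w(i) = k+i for i < n-k, w(n-k) = k-1, w(i) = i-(n-k)-1 for
i > n-k) has exactly (n-k)(k-1) occurrences of the pattern 321. -/
theorem stmt_4 (n k : ℕ) (hn : 3 ≤ n) (hk1 : 2 ≤ k) (hk2 : k ≤ n - 1)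
    (w : Equiv.Perm (Fin n))
    (h1 : ∀ i : Fin n, (i : ℕ) < n - k → (w i : ℕ) = k + (i : ℕ))
    (h2 : ∀ i : Fin n, (i : ℕ) = n - k → (w i : ℕ) = k - 1)
    (h3 : ∀ i : Fin n, n - k < (i : ℕ) → (w i : ℕ) = (i : ℕ) - (n - k) - 1) :
    (Finset.filter (fun p : Fin n × Fin n × Fin n =>
        p.1 < p.2.1 ∧ p.2.1 < p.2.2 ∧ w p.2.2 < w p.2.1 ∧ w p.2.1 < w p.1)
      Finset.univ).card = (n - k) * (k - 1) := by
  haveI : NeZero n := ⟨by omega⟩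
  have hnkn : n - k < n := by omega
  have hwlt : ∀ p : Fin n × Fin n × Fin n,
      (p.1 < p.2.1 ∧ p.2.1 < p.2.2 ∧ w p.2.2 < w p.2.1 ∧ w p.2.1 < w p.1)
      ↔ ((p.1 : ℕ) < n - k ∧ (p.2.1 : ℕ) = n - k ∧ n - k < (p.2.2 : ℕ)) := by
    rintro ⟨i, j, l⟩
    simp only [Fin.lt_def]
    constructor
    · rintro ⟨hij, hjl, hlj, hji⟩
      have hj : (j : ℕ) = n - k := by
        rcases lt_trichotomy (j : ℕ) (n - k) with h | h | h
        · have hi : (w i : ℕ) = k + i := h1 i (by omega)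
          have hjv : (w j : ℕ) = k + j := h1 j h
          omega
        · exact h
        · have hjv : (w j : ℕ) = j - (n - k) - 1 := h3 j h
          have hlv : (w l : ℕ) = l - (n - k) - 1 := h3 l (by omega)
          omega
      exact ⟨by omega, hj, by omega⟩
    · rintro ⟨hi, hj, hl⟩
      have hiv := h1 i hi
      have hjv := h2 j hj
      have hlv := h3 l hl
      have hln : (l : ℕ) < n := l.isLt
      exact ⟨by omega, by omega, by omega, by omega⟩
  open Fin.NatCast in
  have hset : (Finset.filter (fun p : Fin n × Fin n × Fin n =>
        p.1 < p.2.1 ∧ p.2.1 < p.2.2 ∧ w p.2.2 < w p.2.1 ∧ w p.2.1 < w p.1)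
      Finset.univ) =
      Finset.image (fun ab : ℕ × ℕ =>
          ((ab.1 : Fin n), ((n - k : ℕ) : Fin n), ((n - k + 1 + ab.2 : ℕ) : Fin n)))
        ((Finset.range (n - k)) ×ˢ (Finset.range (k - 1))) := by
    ext ⟨i, j, l⟩
    simp only [Finset.mem_filter, Finset.mem_univ, true_and, hwlt, Finset.mem_image,
      Finset.mem_product, Finset.mem_range, Prod.mk.injEq, Prod.exists]
    constructor
    · rintro ⟨hi, hj, hl⟩
      have hln : (l : ℕ) < n := l.isLt
      refine ⟨(i : ℕ), (l : ℕ) - (n - k) - 1, ⟨hi, by omega⟩, ?_, ?_, ?_⟩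
      · exact Fin.cast_val_eq_self i
      · apply Fin.ext
        rw [Fin.val_cast_of_lt hnkn]
        omega
      · apply Fin.ext
        rw [Fin.val_cast_of_lt (show n - k + 1 + ((l : ℕ) - (n - k) - 1) < n by omega)]
        omega
    · rintro ⟨a, b, ⟨ha, hb⟩, hia, hja, hla⟩
      have hiv : (i : ℕ) = a := by rw [← hia, Fin.val_cast_of_lt (by omega)]
      have hjv : (j : ℕ) = n - k := by rw [← hja, Fin.val_cast_of_lt hnkn]
      have hlv : (l : ℕ) = n - k + 1 + b := by rw [← hla, Fin.val_cast_of_lt (by omega)]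
      exact ⟨by omega, hjv, by omega⟩
  rw [hset, Finset.card_image_of_injOn, Finset.card_product, Finset.card_range,
    Finset.card_range]
  open Fin.NatCast in
  rintro ⟨a, b⟩ hab ⟨a', b'⟩ hab' heq
  simp only [Finset.coe_product, Finset.coe_range, Set.mem_prod, Set.mem_Iio] at hab hab'
  simp only [Prod.mk.injEq] at heq
  obtain ⟨h1', -, h3'⟩ := heq
  have ha : a = a' := by
    have := congrArg Fin.val h1'
    rwa [Fin.val_cast_of_lt (by omega), Fin.val_cast_of_lt (by omega)] at this
  have hb : b = b' := by
    have := congrArg Fin.val h3'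
    rw [Fin.val_cast_of_lt (by omega), Fin.val_cast_of_lt (by omega)] at this
    omega
  simp [ha, hb]
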